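/- Define F(x,y) = (1 + x² + y² + xy)/(x(1+x²)) + 1/(y-x) for x,y ∈ ℝ \ {0}, x ≠ y. Then F(x,y) = lim_{ε→0} (f_{x,ε}(y) - y)/ε², where f_{x,ε} is the conformal map from ℍ \ B̄(x,ε) onto ℍ fixing 0 and i obtained by post-composing g_{x,ε}(z) = z + ε²/(z-x) with the Möbius transformation z ↦ b(z - c)/(b² + (c-a)(z - a)), where a = Re g_{x,ε}(i), b = Im g_{x,ε}(i), c = g_{x,ε}(0). -/

import Mathlib

open Complex Filter

/-- The map `g_{x,ε}(z) = z + ε²/(z - x)`. -/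
noncomputable def gMap (x ε : ℝ) (z : ℂ) : ℂ := z + (ε : ℂ)^2 / (z - x)

/-- The normalized conformal map `f_{x,ε}` from `ℍ \ B̄(x,ε)` onto `ℍ` fixing `0` and `i`,
obtained by post-composing `g_{x,ε}` with the Möbius map `z ↦ b(z-c)/(b² + (c-a)(z-a))`
where `a = Re g_{x,ε}(i)`, `b = Im g_{x,ε}(i)`, `c = g_{x,ε}(0)`. -/
noncomputable def fMap (x ε : ℝ) (z : ℂ) : ℂ :=
  let a : ℂ := ((gMap x ε Complex.I).re : ℝ)
  let b : ℂ := ((gMap x ε Complex.I).im : ℝ)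
  let c : ℂ := gMap x ε 0
  b * (gMap x ε z - c) / (b^2 + (c - a) * (gMap x ε z - a))

/-- `F(x,y) = lim_{ε→0} (f_{x,ε}(y) - y)/ε²` with
`F(x,y) = (1+x²+y²+xy)/(x(1+x²)) + 1/(y-x)`. -/
theorem fMap_first_order_expansion (x y : ℝ) (hx : x ≠ 0) (hy : y ≠ 0) (hxy : y ≠ x) :
    Tendsto (fun ε : ℝ => (fMap x ε (y : ℂ) - (y : ℂ)) / (ε : ℂ)^2)
      (nhdsWithin 0 (Set.Ioi 0))
      (nhds (((1 + x^2 + y^2 + x*y) / (x * (1 + x^2)) + 1 / (y - x) : ℝ) : ℂ)) := by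
  have hX : (x : ℂ) ≠ 0 := Complex.ofReal_ne_zero.2 hx
  have hD : (y : ℂ) - (x : ℂ) ≠ 0 := sub_ne_zero.2 (by exact_mod_cast hxy)
  have hsR : (1 + x^2 : ℝ) ≠ 0 := by positivity
  have hS : (1 : ℂ) + (x : ℂ)^2 ≠ 0 := by
    have := Complex.ofReal_ne_zero.2 hsR
    push_cast at this
    exact this
  set X : ℂ := (x : ℂ) with hXdef
  set Y : ℂ := (y : ℂ) with hYdef
  set P : ℂ := (1+X^2) * ((1+X^2)*X + (1+X^2)*(Y-X) + X*Y*(Y-X) + (Y-X)*Y^2) with hP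
  set Q : ℝ → ℂ := fun ε =>
    X*(Y-X)*((1+X^2) - (ε:ℂ)^2)^2 - (ε:ℂ)^2*(1+X^2)*(Y*(Y-X)+(ε:ℂ)^2)
      - (ε:ℂ)^4*X*(Y-X) with hQdef
  have hQ0 : Q 0 ≠ 0 := by
    have : Q 0 = X*(Y-X)*(1+X^2)^2 := by simp [hQdef]
    rw [this]
    exact mul_ne_zero (mul_ne_zero hX hD) (pow_ne_zero _ hS)
  have hQcont : Continuous Q := by
    apply Continuous.sub
    apply Continuous.sub
    · fun_prop
    · fun_prop
    · fun_prop
  have hval : P / Q 0 = (((1 + x^2 + y^2 + x*y) / (x * (1 + x^2)) + 1 / (y - x) : ℝ) : ℂ) := by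
    have hQ0eq : Q 0 = X*(Y-X)*(1+X^2)^2 := by simp [hQdef]
    rw [hQ0eq, hP]
    push_cast
    rw [hXdef, hYdef]
    have h1 : (x:ℂ) ≠ 0 := by exact_mod_cast hx
    have h2 : (y:ℂ) - (x:ℂ) ≠ 0 := sub_ne_zero.2 (by exact_mod_cast hxy)
    have h3 : (1:ℂ) + (x:ℂ)^2 ≠ 0 := by exact_mod_cast hsR
    field_simp
    ring
  have hlim : Tendsto (fun ε : ℝ => P / Q ε) (nhdsWithin 0 (Set.Ioi 0))
      (nhds (((1 + x^2 + y^2 + x*y) / (x * (1 + x^2)) + 1 / (y - x) : ℝ) : ℂ)) := by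
    rw [← hval]
    exact (tendsto_const_nhds.div (hQcont.tendsto 0) hQ0).mono_left nhdsWithin_le_nhds
  refine Tendsto.congr' ?_ hlim
  have hQev : ∀ᶠ ε in nhdsWithin (0:ℝ) (Set.Ioi 0), Q ε ≠ 0 :=
    (((hQcont.tendsto 0).mono_left nhdsWithin_le_nhds)).eventually_ne hQ0
  filter_upwards [hQev, self_mem_nhdsWithin] with ε hQε hεpos
  have hε0 : (ε : ℂ) ≠ 0 := Complex.ofReal_ne_zero.2 (ne_of_gt hεpos)
  -- compute re and im of gMap x ε I
  have hcast : ((ε:ℂ))^2 = ((ε^2 : ℝ) : ℂ) := by push_cast; ring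
  have hre : (gMap x ε Complex.I).re = -(ε^2*x)/(1+x^2) := by
    rw [gMap, hcast]
    rw [show Complex.I - (x:ℂ) = Complex.mk (-x) 1 by
      apply Complex.ext <;> simp]
    simp [Complex.div_re, Complex.normSq_mk, ← Complex.ofReal_pow]
    ring
  have him : (gMap x ε Complex.I).im = 1 - ε^2/(1+x^2) := by
    rw [gMap, hcast]
    rw [show Complex.I - (x:ℂ) = Complex.mk (-x) 1 by
      apply Complex.ext <;> simp]
    simp [Complex.div_im, Complex.normSq_mk, ← Complex.ofReal_pow]
    ring
  have hc : gMap x ε 0 = -((ε:ℂ)^2 / X) := by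
    simp [gMap, hXdef]
    ring
  -- the denominator of fMap is nonzero
  set aC : ℂ := (((gMap x ε Complex.I).re : ℝ) : ℂ) with haC
  set bC : ℂ := (((gMap x ε Complex.I).im : ℝ) : ℂ) with hbC
  have haC' : aC = -((ε:ℂ)^2*X)/(1+X^2) := by
    rw [haC, hre]; push_cast; rw [hXdef]
  have hbC' : bC = 1 - (ε:ℂ)^2/(1+X^2) := by
    rw [hbC, him]; push_cast; rw [hXdef]
  have hgy : gMap x ε (y:ℂ) = Y + (ε:ℂ)^2/(Y-X) := by rw [gMap, hXdef, hYdef]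
  have hDen : bC^2 + (gMap x ε 0 - aC) * (gMap x ε (y:ℂ) - aC) ≠ 0 := by
    intro h
    apply hQε
    have key : (bC^2 + (gMap x ε 0 - aC) * (gMap x ε (y:ℂ) - aC)) * (X * (1+X^2)^2 * (Y-X))
        = Q ε := by
      rw [haC', hbC', hc, hgy, hQdef]
      field_simp
      ring
    rw [← key, h, zero_mul]
  rw [show fMap x ε (y:ℂ) = bC * (gMap x ε (y:ℂ) - gMap x ε 0) /
      (bC^2 + (gMap x ε 0 - aC) * (gMap x ε (y:ℂ) - aC)) from rfl]
  rw [eq_comm, div_eq_div_iff (pow_ne_zero 2 hε0) hQε]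
  rw [sub_mul, div_mul_eq_mul_div, sub_eq_iff_eq_add, div_eq_iff hDen, haC', hbC', hc, hgy, hQdef, hP]
  field_simp
  ring
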